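/- arXiv:2209.07750 — 3 statements merged into one kernel-verified Lean document; each statement's English description precedes it below -/
import Mathlib

section
/- Angle inductive bound: let $S, T$ be $d\times d$ real matrices with $S$ invertible, let $x, y$ be unit vectors and $\varphi > 0$ with $Sy\varphi + Tx \ne 0$ and $Sx \ne 0$. Then $\delta\big(Sx,\ Sy\varphi + Tx\big) \le \delta(Sx, Tx)\,\frac{\|Tx\|_2}{\|Sy\varphi + Tx\|_2} + \delta(x,y)\,\frac{\varphi}{\|Sy\varphi + Tx\|_2}\cdot\frac{\|\wedge^2 S\|_2}{\|Sx\|_2}$, where $\|\wedge^2 S\|_2$ is the operator norm of the induced map on $\bigwedge^2 \mathbb{R}^d$ and $\delta(u,v) = \|u\wedge v\|_2/(\|u\|_2\|v\|_2)$. -/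
/-- angle inductive bound.  Here `w u v = ‖u ∧ v‖₂` is the wedge norm,
`δ u v = w u v / (‖u‖ ‖v‖)` the sine-distance, and `Λ` is (an upper bound for)
the operator norm `‖∧²S‖₂` of the induced map on `⋀² ℝᵈ`, characterised by
`w (S u) (S v) ≤ Λ · w u v`. -/
theorem stmt_11 (d : ℕ)
    (S T : EuclideanSpace ℝ (Fin d) →L[ℝ] EuclideanSpace ℝ (Fin d))
    (hSinj : Function.Injective S)
    (x y : EuclideanSpace ℝ (Fin d)) (hx : ‖x‖ = 1) (hy : ‖y‖ = 1)
    (φ : ℝ) (hφ : 0 < φ)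
    (hne : φ • S y + T x ≠ 0) (hSx : S x ≠ 0)
    (w : EuclideanSpace ℝ (Fin d) → EuclideanSpace ℝ (Fin d) → ℝ)
    (hw : ∀ u v, w u v = Real.sqrt (‖u‖ ^ 2 * ‖v‖ ^ 2 - (inner ℝ u v : ℝ) ^ 2))
    (δ : EuclideanSpace ℝ (Fin d) → EuclideanSpace ℝ (Fin d) → ℝ)
    (hδ : ∀ u v, δ u v = w u v / (‖u‖ * ‖v‖))
    (Λ : ℝ) (hΛ : ∀ u v, w (S u) (S v) ≤ Λ * w u v) :
    δ (S x) (φ • S y + T x)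
      ≤ δ (S x) (T x) * (‖T x‖ / ‖φ • S y + T x‖)
        + δ x y * (φ / ‖φ • S y + T x‖) * (Λ / ‖S x‖) := by
  have wnn : ∀ u v, 0 ≤ w u v := fun u v => by rw [hw]; exact Real.sqrt_nonneg _
  -- key representation of w
  have key : ∀ u v : EuclideanSpace ℝ (Fin d), u ≠ 0 →
      w u v = ‖u‖ * ‖v - ((inner ℝ u v : ℝ) / ‖u‖ ^ 2) • u‖ := by
    intro u v hu
    have hu0 : (0 : ℝ) < ‖u‖ := norm_pos_iff.mpr hu
    set c : ℝ := (inner ℝ u v : ℝ) / ‖u‖ ^ 2 with hc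
    have h1 : ‖v - c • u‖ ^ 2 = ‖v‖ ^ 2 - (inner ℝ u v : ℝ) ^ 2 / ‖u‖ ^ 2 := by
      rw [norm_sub_sq_real, real_inner_smul_right, norm_smul, real_inner_comm]
      rw [mul_pow, Real.norm_eq_abs, sq_abs, hc]
      field_simp
      ring
    have h2 : ‖u‖ ^ 2 * ‖v‖ ^ 2 - (inner ℝ u v : ℝ) ^ 2
        = (‖u‖ * ‖v - c • u‖) ^ 2 := by
      rw [mul_pow, h1]
      field_simp
    rw [hw, h2, Real.sqrt_sq (by positivity)]
  have hSx0 : (0 : ℝ) < ‖S x‖ := norm_pos_iff.mpr hSx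
  -- triangle inequality in the second argument
  have tri : w (S x) (φ • S y + T x) ≤ w (S x) (φ • S y) + w (S x) (T x) := by
    rw [key _ _ hSx, key _ _ hSx, key _ _ hSx]
    rw [← mul_add]
    apply mul_le_mul_of_nonneg_left _ hSx0.le
    have heq : (φ • S y + T x) - ((inner ℝ (S x) (φ • S y + T x) : ℝ) / ‖S x‖ ^ 2) • S x
        = ((φ • S y) - ((inner ℝ (S x) (φ • S y) : ℝ) / ‖S x‖ ^ 2) • S x)
          + ((T x) - ((inner ℝ (S x) (T x) : ℝ) / ‖S x‖ ^ 2) • S x) := by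
      rw [inner_add_right, add_div, add_smul]
      abel
    rw [heq]
    exact norm_add_le _ _
  -- scaling
  have scale : w (S x) (φ • S y) = φ * w (S x) (S y) := by
    rw [hw, hw, real_inner_smul_right, norm_smul, Real.norm_eq_abs,
      abs_of_pos hφ, mul_pow, mul_pow]
    rw [show ‖S x‖ ^ 2 * (φ ^ 2 * ‖S y‖ ^ 2) - φ ^ 2 * (inner ℝ (S x) (S y) : ℝ) ^ 2
        = φ ^ 2 * (‖S x‖ ^ 2 * ‖S y‖ ^ 2 - (inner ℝ (S x) (S y) : ℝ) ^ 2) by ring]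
    rw [Real.sqrt_mul (by positivity), Real.sqrt_sq hφ.le]
  have hmain : w (S x) (φ • S y + T x) ≤ w (S x) (T x) + φ * (Λ * w x y) :=
    calc w (S x) (φ • S y + T x) ≤ w (S x) (φ • S y) + w (S x) (T x) := tri
      _ = φ * w (S x) (S y) + w (S x) (T x) := by rw [scale]
      _ ≤ φ * (Λ * w x y) + w (S x) (T x) := by
          have := mul_le_mul_of_nonneg_left (hΛ x y) hφ.le
          linarith
      _ = w (S x) (T x) + φ * (Λ * w x y) := add_comm _ _
  have hn0 : (0 : ℝ) < ‖φ • S y + T x‖ := norm_pos_iff.mpr hne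
  have hΛw : 0 ≤ Λ * w x y := le_trans (wnn (S x) (S y)) (hΛ x y)
  have hδxy : δ x y = w x y := by rw [hδ, hx, hy]; simp
  by_cases hT : T x = 0
  · have hw0 : w (S x) (T x) = 0 := by rw [hT, hw]; simp
    have hδ0 : δ (S x) (T x) = 0 := by rw [hδ, hw0]; simp
    rw [hδ0, hδ, hδxy, zero_mul]
    calc w (S x) (φ • S y + T x) / (‖S x‖ * ‖φ • S y + T x‖)
        ≤ (φ * (Λ * w x y)) / (‖S x‖ * ‖φ • S y + T x‖) := by
          apply div_le_div_of_nonneg_right _ (by positivity)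
          · linarith [hmain, hw0]
      _ = 0 + w x y * (φ / ‖φ • S y + T x‖) * (Λ / ‖S x‖) := by
          field_simp; ring
  · have hT0 : (0 : ℝ) < ‖T x‖ := norm_pos_iff.mpr hT
    rw [hδ, hδ, hδxy]
    calc w (S x) (φ • S y + T x) / (‖S x‖ * ‖φ • S y + T x‖)
        ≤ (w (S x) (T x) + φ * (Λ * w x y)) / (‖S x‖ * ‖φ • S y + T x‖) := by
          apply div_le_div_of_nonneg_right hmain (by positivity)
      _ = w (S x) (T x) / (‖S x‖ * ‖T x‖) * (‖T x‖ / ‖φ • S y + T x‖)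
          + w x y * (φ / ‖φ • S y + T x‖) * (Λ / ‖S x‖) := by
          field_simp
end

section
/- Trace criterion: let $\{(A_n, B_n)\}$ be i.i.d. with $A_n$ invertible, and $T_n$ the first derived product. If $\mathbb{E}[\operatorname{tr}(B_1 A_1^{-1})] \ne 0$ (and $\operatorname{tr}(B_1A_1^{-1})$ is integrable), then $\mathbb{P}(T_n = 0 \text{ infinitely often}) = 0$. -/
open MeasureTheory ProbabilityTheory Filter Finset

lemma meas_phi (d : ℕ) : Measurable (fun p : (Fin d → Fin d → ℝ) × (Fin d → Fin d → ℝ) =>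
    (Matrix.of p.2 * (Matrix.of p.1)⁻¹).trace) := by
  have h1 : (fun p : (Fin d → Fin d → ℝ) × (Fin d → Fin d → ℝ) =>
      (Matrix.of p.2 * (Matrix.of p.1)⁻¹).trace)
      = fun p => ((Matrix.of p.1).det)⁻¹ * (Matrix.of p.2 * (Matrix.of p.1).adjugate).trace := by
    funext p
    rw [Matrix.inv_def, Matrix.mul_smul, Matrix.trace_smul, smul_eq_mul, Ring.inverse_eq_inv]
  rw [h1]
  have hdet : Continuous (fun p : (Fin d → Fin d → ℝ) × (Fin d → Fin d → ℝ) =>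
      (Matrix.of p.1).det) := Continuous.matrix_det continuous_fst
  have htr : Continuous (fun p : (Fin d → Fin d → ℝ) × (Fin d → Fin d → ℝ) =>
      (Matrix.of p.2 * (Matrix.of p.1).adjugate).trace) :=
    (Continuous.matrix_mul continuous_snd (Continuous.matrix_adjugate continuous_fst)).matrix_trace
  exact hdet.measurable.inv.mul htr.measurable

/-- trace criterion.  For an i.i.d. sequence of pairs `(Aₙ, Bₙ)` with
`Aₙ` invertible, if `tr(B₁A₁⁻¹)` is integrable with `𝔼[tr(B₁A₁⁻¹)] ≠ 0`, then
almost surely `Tₙ = 0` occurs only finitely often. -/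
theorem stmt_16 (d : ℕ) (Ω : Type*) [MeasureSpace Ω]
    [IsProbabilityMeasure (ℙ : Measure Ω)]
    (A B : ℕ → Ω → Matrix (Fin d) (Fin d) ℝ)
    (hAinv : ∀ n ω, IsUnit (A n ω))
    (f : ℕ → Ω → (Fin d → Fin d → ℝ) × (Fin d → Fin d → ℝ))
    (hf : ∀ n ω, f n ω = (A (n + 1) ω, B (n + 1) ω))
    (hmeas : ∀ n, Measurable (f n))
    (hindep : iIndepFun f ℙ)
    (hid : ∀ n, IdentDistrib (f n) (f 0) ℙ ℙ)
    (S T : ℕ → Ω → Matrix (Fin d) (Fin d) ℝ)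
    (hS0 : ∀ ω, S 0 ω = 1) (hS : ∀ n ω, S (n + 1) ω = A (n + 1) ω * S n ω)
    (hT0 : ∀ ω, T 0 ω = 0)
    (hT : ∀ n ω, T (n + 1) ω = B (n + 1) ω * S n ω + A (n + 1) ω * T n ω)
    (hint : Integrable (fun ω => (B 1 ω * (A 1 ω)⁻¹).trace) ℙ)
    (hne : (∫ ω, (B 1 ω * (A 1 ω)⁻¹).trace ∂ℙ) ≠ 0) :
    ℙ {ω | ∀ m, ∃ n, m ≤ n ∧ T n ω = 0} = 0 := by
  set φ : (Fin d → Fin d → ℝ) × (Fin d → Fin d → ℝ) → ℝ :=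
    fun p => (Matrix.of p.2 * (Matrix.of p.1)⁻¹).trace with hφ
  set g : ℕ → Ω → ℝ := fun n ω => φ (f n ω) with hgdef
  have hg : ∀ n ω, g n ω = (B (n + 1) ω * (A (n + 1) ω)⁻¹).trace := by
    intro n ω; simp only [hgdef, hφ, hf n ω]; rfl
  have hg0 : g 0 = fun ω => (B 1 ω * (A 1 ω)⁻¹).trace := funext fun ω => hg 0 ω
  -- S n ω is a unit
  have hSunit : ∀ n ω, IsUnit (S n ω) := by
    intro n ω
    induction n with
    | zero => rw [hS0]; exact isUnit_one
    | succ k ih => rw [hS]; exact (hAinv (k + 1) ω).mul ih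
  -- trace identity
  have htrace : ∀ n ω, (T n ω * (S n ω)⁻¹).trace = ∑ i ∈ range n, g i ω := by
    intro n ω
    induction n with
    | zero => simp [hT0]
    | succ k ih =>
      have hAdet : IsUnit (A (k + 1) ω).det := (Matrix.isUnit_iff_isUnit_det _).1 (hAinv _ _)
      have hSdet : IsUnit (S k ω).det := (Matrix.isUnit_iff_isUnit_det _).1 (hSunit _ _)
      rw [hT, hS, Matrix.mul_inv_rev, sum_range_succ, ← ih, add_mul]
      have e1 : B (k + 1) ω * S k ω * ((S k ω)⁻¹ * (A (k + 1) ω)⁻¹)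
          = B (k + 1) ω * (A (k + 1) ω)⁻¹ := by
        rw [Matrix.mul_assoc, ← Matrix.mul_assoc (S k ω), Matrix.mul_nonsing_inv _ hSdet,
          Matrix.one_mul]
      have e2 : A (k + 1) ω * T k ω * ((S k ω)⁻¹ * (A (k + 1) ω)⁻¹)
          = A (k + 1) ω * (T k ω * (S k ω)⁻¹) * (A (k + 1) ω)⁻¹ := by
        noncomm_ring
      rw [e1, e2, Matrix.trace_add, Matrix.trace_mul_cycle,
        Matrix.nonsing_inv_mul _ hAdet, Matrix.one_mul, hg, add_comm]
  -- i.i.d. structure for g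
  have hindep' : Pairwise (Function.onFun (IndepFun · · ℙ) g) := fun i j hij =>
    (hindep.indepFun hij).comp (meas_phi d) (meas_phi d)
  have hident' : ∀ i, IdentDistrib (g i) (g 0) ℙ ℙ := fun i =>
    (hid i).comp (meas_phi d)
  have hint' : Integrable (g 0) ℙ := by rw [hg0]; exact hint
  have slln := strong_law_ae_real g hint' hindep' hident'
  have hμ : (∫ ω, g 0 ω ∂ℙ) ≠ 0 := by rw [hg0]; exact hne
  refine measure_mono_null ?_ (ae_iff.1 slln)
  intro ω hω
  simp only [Set.mem_setOf_eq] at hω ⊢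
  intro hTend
  set μ := ∫ ω, g 0 ω ∂ℙ
  have hball := hTend.eventually (Metric.ball_mem_nhds μ (abs_pos.2 hμ))
  rw [eventually_atTop] at hball
  obtain ⟨N, hN⟩ := hball
  obtain ⟨n, hn, hTn⟩ := hω N
  have hs : (∑ i ∈ range n, g i ω) = 0 := by
    have := htrace n ω
    rw [hTn, Matrix.zero_mul, Matrix.trace_zero] at this
    exact this.symm
  have := hN n hn
  rw [hs, zero_div, Real.dist_eq, zero_sub, abs_neg] at this
  exact lt_irrefl _ this
end

section
/- Diagonal counterexample: let $A_n = \operatorname{diag}(\alpha, \beta)$ with $\alpha > \beta > 0$ and $B_n = \begin{pmatrix}0 & -1\\ 1 & 0\end{pmatrix}$ for all $n$. Then $S_{n+1} = \operatorname{diag}(\alpha^{n+1}, \beta^{n+1})$ and the first derived product satisfies $T_{n+1} = \begin{pmatrix} 0 & -\sum_{i=0}^n \alpha^{n-i}\beta^i \\ \sum_{i=0}^n \beta^{n-i}\alpha^i & 0\end{pmatrix}$. Consequently, for the standard basis vectors, $\frac{1}{n}\frac{\|T_{n+1}e_1\|_2}{\|S_{n+1}e_1\|_2} \to 0$ and $\frac{1}{n}\frac{\|T_{n+1}e_2\|_2}{\|S_{n+1}e_2\|_2}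 \to \infty$ as $n \to \infty$. -/
open Filter Finset

lemma norm_col' (M : Matrix (Fin 2) (Fin 2) ℝ) (j : Fin 2) :
    ‖Matrix.toEuclideanCLM (𝕜 := ℝ) M (EuclideanSpace.single (j : Fin 2) 1)‖
      = Real.sqrt ((M 0 j)^2 + (M 1 j)^2) := by
  have : (EuclideanSpace.single (j : Fin 2) (1:ℝ)) = (WithLp.equiv 2 _).symm (Pi.single j 1) := rfl
  rw [this, WithLp.equiv_symm_apply, Matrix.toEuclideanCLM_toLp, EuclideanSpace.norm_eq]
  simp [Fin.sum_univ_two, Matrix.mulVec_single, sq_abs]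

lemma sum_eq_geom' (a b : ℝ) (hab : b ≠ a) (n : ℕ) :
    ∑ i ∈ range (n+1), a ^ (n - i) * b ^ i = (a^(n+1) - b^(n+1)) / (a - b) := by
  have h := geom_sum₂_mul b a (n+1)
  simp only [Nat.add_sub_cancel] at h
  have key : ∑ i ∈ range (n+1), a ^ (n - i) * b ^ i
      = ∑ i ∈ range (n+1), b ^ i * a ^ (n - i) :=
    Finset.sum_congr rfl fun i _ => mul_comm _ _
  rw [key, eq_div_iff (sub_ne_zero.mpr (Ne.symm hab))]
  linear_combination -h



open Filter in
/-- diagonal counterexample.  With `Aₙ = diag(α, β)`, `α > β > 0`, and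
`Bₙ = R_{π/2}`, one has `S_{n+1} = diag(α^{n+1}, β^{n+1})`,
`T_{n+1} = [[0, -∑ αⁿ⁻ⁱβⁱ], [∑ βⁿ⁻ⁱαⁱ, 0]]`, and
`‖T_{n+1}e₁‖/(n‖S_{n+1}e₁‖) → 0` while `‖T_{n+1}e₂‖/(n‖S_{n+1}e₂‖) → ∞`. -/
theorem stmt_19 (α β : ℝ) (hβ : 0 < β) (hαβ : β < α)
    (A B S T : ℕ → Matrix (Fin 2) (Fin 2) ℝ)
    (hA : ∀ n, A n = Matrix.of ![![α, 0], ![0, β]])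
    (hB : ∀ n, B n = Matrix.of ![![0, -1], ![1, 0]])
    (hS0 : S 0 = 1) (hS : ∀ n, S (n + 1) = A (n + 1) * S n)
    (hT0 : T 0 = 0) (hT : ∀ n, T (n + 1) = B (n + 1) * S n + A (n + 1) * T n) :
    (∀ n, S (n + 1) = Matrix.of ![![α ^ (n + 1), 0], ![0, β ^ (n + 1)]]) ∧
    (∀ n, T (n + 1) = Matrix.of
      ![![0, -∑ i ∈ Finset.range (n + 1), α ^ (n - i) * β ^ i],
        ![∑ i ∈ Finset.range (n + 1), β ^ (n - i) * α ^ i, 0]]) ∧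
    Tendsto (fun n : ℕ =>
        (‖Matrix.toEuclideanCLM (𝕜 := ℝ) (T (n + 1)) (EuclideanSpace.single (0 : Fin 2) 1)‖
          / ‖Matrix.toEuclideanCLM (𝕜 := ℝ) (S (n + 1)) (EuclideanSpace.single (0 : Fin 2) 1)‖)
          / (n : ℝ)) atTop (nhds 0) ∧
    Tendsto (fun n : ℕ =>
        (‖Matrix.toEuclideanCLM (𝕜 := ℝ) (T (n + 1)) (EuclideanSpace.single (1 : Fin 2) 1)‖
          / ‖Matrix.toEuclideanCLM (𝕜 := ℝ) (S (n + 1)) (EuclideanSpace.single (1 : Fin 2) 1)‖)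
          / (n : ℝ)) atTop atTop := by
  have hα : 0 < α := hβ.trans hαβ
  have hSn : ∀ n, S (n + 1) = Matrix.of ![![α ^ (n + 1), 0], ![0, β ^ (n + 1)]] := by
    intro n
    induction n with
    | zero =>
      rw [hS, hS0, hA, mul_one]
      ext i j; fin_cases i <;> fin_cases j <;> simp
    | succ m ih =>
      rw [hS, ih, hA]
      ext i j
      fin_cases i <;> fin_cases j <;>
        simp [Matrix.mul_apply, Fin.sum_univ_two, pow_succ] <;> ring
  have hTn : ∀ n, T (n + 1) = Matrix.of
      ![![0, -∑ i ∈ Finset.range (n + 1), α ^ (n - i) * β ^ i],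
        ![∑ i ∈ Finset.range (n + 1), β ^ (n - i) * α ^ i, 0]] := by
    intro n
    induction n with
    | zero =>
      rw [hT, hT0, hS0, hB, hA, mul_one, mul_zero, add_zero]
      ext i j; fin_cases i <;> fin_cases j <;> simp
    | succ m ih =>
      rw [hT, ih, hA, hB, hSn m]
      have hrec : ∀ a b : ℝ, ∑ i ∈ range (m + 2), a ^ (m + 1 - i) * b ^ i
          = a * ∑ i ∈ range (m + 1), a ^ (m - i) * b ^ i + b ^ (m + 1) := by
        intro a b
        rw [Finset.sum_range_succ, Finset.mul_sum]
        congr 1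
        · apply Finset.sum_congr rfl
          intro i hi
          have hi' : i ≤ m := Nat.lt_succ_iff.mp (Finset.mem_range.mp hi)
          rw [show m + 1 - i = (m - i) + 1 by omega, pow_succ]
          ring
        · simp
      ext i j
      fin_cases i <;> fin_cases j <;>
        simp [Matrix.add_apply, Matrix.mul_apply, Fin.sum_univ_two, hrec] <;> ring
  refine ⟨hSn, hTn, ?_, ?_⟩
  · -- e1 case → 0
    have hsum : ∀ n, ∑ i ∈ range (n + 1), β ^ (n - i) * α ^ i
        = (β ^ (n+1) - α ^ (n+1)) / (β - α) := fun n => sum_eq_geom' β α (ne_of_gt hαβ) n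
    have hQpos : ∀ n : ℕ, 0 < ∑ i ∈ range (n + 1), β ^ (n - i) * α ^ i := by
      intro n
      apply Finset.sum_pos
      · intro i _; positivity
      · exact ⟨0, Finset.mem_range.mpr (Nat.succ_pos n)⟩
    have hratio : ∀ n : ℕ,
        ‖Matrix.toEuclideanCLM (𝕜 := ℝ) (T (n + 1)) (EuclideanSpace.single (0 : Fin 2) 1)‖
          / ‖Matrix.toEuclideanCLM (𝕜 := ℝ) (S (n + 1)) (EuclideanSpace.single (0 : Fin 2) 1)‖
        = (∑ i ∈ range (n + 1), β ^ (n - i) * α ^ i) / α ^ (n + 1) := by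
      intro n
      rw [norm_col', norm_col', hSn, hTn]
      have h1 : Real.sqrt ((0:ℝ)^2 + (∑ i ∈ range (n + 1), β ^ (n - i) * α ^ i)^2)
          = ∑ i ∈ range (n + 1), β ^ (n - i) * α ^ i := by
        rw [zero_pow (by norm_num), zero_add, Real.sqrt_sq (hQpos n).le]
      have h2 : Real.sqrt ((α ^ (n+1):ℝ)^2 + (0:ℝ)^2) = α ^ (n + 1) := by
        rw [zero_pow (by norm_num), add_zero, Real.sqrt_sq (by positivity)]
      simp only [Matrix.of_apply, Matrix.cons_val', Matrix.cons_val_zero, Matrix.cons_val_one,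
        Matrix.head_cons, Matrix.empty_val', Matrix.cons_val_fin_one, Matrix.head_fin_const]
      rw [h1, h2]
    have hbound : ∀ n : ℕ,
        (∑ i ∈ range (n + 1), β ^ (n - i) * α ^ i) / α ^ (n + 1) ≤ 1 / (α - β) := by
      intro n
      rw [hsum]
      rw [div_le_div_iff₀ (by positivity) (by linarith)]
      have heq : (β ^ (n+1) - α ^ (n+1)) / (β - α) = (α ^ (n+1) - β ^ (n+1)) / (α - β) := by
        rw [div_eq_div_iff (by linarith) (by linarith)]; ring
      rw [heq, div_mul_cancel₀ _ (by linarith : α - β ≠ 0)]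
      have hβn : 0 < β ^ (n+1) := by positivity
      nlinarith
    apply squeeze_zero (fun n => by positivity)
      (g := fun n : ℕ => (1 / (α - β)) / (n : ℝ))
    · intro n
      rw [hratio]
      exact div_le_div_of_nonneg_right (hbound n) (Nat.cast_nonneg n)
    · exact tendsto_const_div_atTop_nhds_zero_nat _
  · -- e2 case → ∞
    have hPpos : ∀ n : ℕ, 0 < ∑ i ∈ range (n + 1), α ^ (n - i) * β ^ i := by
      intro n
      apply Finset.sum_pos
      · intro i _; positivity
      · exact ⟨0, Finset.mem_range.mpr (Nat.succ_pos n)⟩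
    have hratio : ∀ n : ℕ,
        ‖Matrix.toEuclideanCLM (𝕜 := ℝ) (T (n + 1)) (EuclideanSpace.single (1 : Fin 2) 1)‖
          / ‖Matrix.toEuclideanCLM (𝕜 := ℝ) (S (n + 1)) (EuclideanSpace.single (1 : Fin 2) 1)‖
        = (∑ i ∈ range (n + 1), α ^ (n - i) * β ^ i) / β ^ (n + 1) := by
      intro n
      rw [norm_col', norm_col', hSn, hTn]
      have h1 : Real.sqrt ((-∑ i ∈ range (n + 1), α ^ (n - i) * β ^ i)^2 + (0:ℝ)^2)
          = ∑ i ∈ range (n + 1), α ^ (n - i) * β ^ i := by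
        rw [zero_pow (by norm_num), add_zero, neg_sq, Real.sqrt_sq (hPpos n).le]
      have h2 : Real.sqrt ((0:ℝ)^2 + (β ^ (n+1):ℝ)^2) = β ^ (n + 1) := by
        rw [zero_pow (by norm_num), zero_add, Real.sqrt_sq (by positivity)]
      simp only [Matrix.of_apply, Matrix.cons_val', Matrix.cons_val_zero, Matrix.cons_val_one,
        Matrix.head_cons, Matrix.empty_val', Matrix.cons_val_fin_one, Matrix.head_fin_const]
      rw [h1, h2]
    have hr : 1 < α / β := (one_lt_div hβ).mpr hαβ
    have h0 : Tendsto (fun n : ℕ => ((n : ℝ) ^ 1) / (α / β) ^ n) atTop (nhds 0) :=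
      tendsto_pow_const_div_const_pow_of_one_lt 1 hr
    have h0' : Tendsto (fun n : ℕ => ((n : ℝ) ^ 1) / (α / β) ^ n) atTop (nhdsWithin 0 (Set.Ioi 0)) := by
      apply tendsto_nhdsWithin_of_tendsto_nhds_of_eventually_within _ h0
      filter_upwards [eventually_ge_atTop 1] with n hn
      have : (0:ℝ) < n := by exact_mod_cast hn
      have : (0:ℝ) < (α / β) ^ n := by positivity
      exact Set.mem_Ioi.mpr (by positivity)
    have hinv : Tendsto (fun n : ℕ => (α / β) ^ n / ((n : ℝ) ^ 1)) atTop atTop := by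
      have := h0'.inv_tendsto_nhdsGT_zero
      simpa [Pi.inv_def, inv_div] using this
    have hdiv : Tendsto (fun n : ℕ => ((α / β) ^ n / (n : ℝ)) / β) atTop atTop := by
      simpa using hinv.atTop_div_const hβ
    apply tendsto_atTop_mono' atTop _ hdiv
    filter_upwards [eventually_ge_atTop 1] with n hn
    rw [hratio]
    have hPl : α ^ n ≤ ∑ i ∈ range (n + 1), α ^ (n - i) * β ^ i := by
      have := Finset.single_le_sum (f := fun i => α ^ (n - i) * β ^ i)
        (fun i _ => by positivity) (Finset.mem_range.mpr (Nat.succ_pos n))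
      simpa using this
    have hnpos : (0:ℝ) < n := by exact_mod_cast hn
    have key : (α / β) ^ n / β ≤ (∑ i ∈ range (n + 1), α ^ (n - i) * β ^ i) / β ^ (n + 1) := by
      have heq : (α / β) ^ n / β = α ^ n / β ^ (n + 1) := by
        rw [div_pow, pow_succ]
        field_simp
      rw [heq]
      exact div_le_div_of_nonneg_right hPl (by positivity)
    calc (α / β) ^ n / (n:ℝ) / β = ((α / β) ^ n / β) / (n:ℝ) := by ring
      _ ≤ _ := div_le_div_of_nonneg_right key hnpos.le
end
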